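/- Breiman's generalized ergodic theorem: Let X = (X_i)_{i∈ℤ} be a stationary ergodic process, T^i the left-shift by i places, and f_1, f_2, … a sequence of real-valued functions of the process such that f_n(X) → f(X) almost surely and E[sup_n |f_n(X)|] < ∞. Then (1/n) Σ_{i=1}^n f_i(T^i X) → E[f(X)] almost surely. -/

import Mathlib

open MeasureTheory Filter Topology

set_option linter.unusedSectionVars false
set_option linter.unusedVariables false

namespace Breiman


variable {Ω : Type*} [MeasurableSpace Ω] {μ : Measure Ω} [IsProbabilityMeasure μ]
  {T : Ω → Ω}

/-- Partial maxima `M n = max (0, S 1, ..., S n)` defined recursively. -/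
noncomputable def M (T : Ω → Ω) (φ : Ω → ℝ) : ℕ → Ω → ℝ
  | 0 => fun _ => 0
  | n + 1 => fun ω => max (M T φ n ω) (birkhoffSum T φ (n + 1) ω)

lemma measurable_birkhoffSum (hTm : Measurable T) {φ : Ω → ℝ} (hφm : Measurable φ) (n : ℕ) :
    Measurable (birkhoffSum T φ n) := by
  unfold birkhoffSum
  exact Finset.measurable_sum _ fun i _ => hφm.comp (hTm.iterate i)

lemma integrable_comp_iterate (hTp : MeasurePreserving T μ μ) {φ : Ω → ℝ}
    (hφm : Measurable φ) (hφi : Integrable φ μ) (i : ℕ) :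
    Integrable (fun ω => φ (T^[i] ω)) μ :=
  ((hTp.iterate i).integrable_comp hφi.aestronglyMeasurable).2 hφi

lemma integrable_birkhoffSum (hTp : MeasurePreserving T μ μ) {φ : Ω → ℝ}
    (hφm : Measurable φ) (hφi : Integrable φ μ) (n : ℕ) :
    Integrable (birkhoffSum T φ n) μ := by
  unfold birkhoffSum
  exact integrable_finset_sum _ fun i _ => integrable_comp_iterate hTp hφm hφi i

lemma measurable_M (hTm : Measurable T) {φ : Ω → ℝ} (hφm : Measurable φ) (n : ℕ) :
    Measurable (M T φ n) := by
  induction n with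
  | zero => exact measurable_const
  | succ n ih => exact ih.max (measurable_birkhoffSum hTm hφm (n + 1))

lemma integrable_M (hTp : MeasurePreserving T μ μ) {φ : Ω → ℝ}
    (hφm : Measurable φ) (hφi : Integrable φ μ) (n : ℕ) :
    Integrable (M T φ n) μ := by
  induction n with
  | zero => exact integrable_const 0
  | succ n ih => exact ih.sup (integrable_birkhoffSum hTp hφm hφi (n + 1))

lemma M_nonneg (φ : Ω → ℝ) (n : ℕ) (ω : Ω) : 0 ≤ M T φ n ω := by
  induction n with
  | zero => exact le_refl 0
  | succ n ih => exact le_trans ih (le_max_left _ _)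

lemma M_mono (φ : Ω → ℝ) (n : ℕ) (ω : Ω) : M T φ n ω ≤ M T φ (n + 1) ω :=
  le_max_left _ _

lemma birkhoffSum_le_M (φ : Ω → ℝ) {k n : ℕ} (h : k ≤ n) (ω : Ω) :
    birkhoffSum T φ k ω ≤ M T φ n ω := by
  induction n with
  | zero =>
    obtain rfl : k = 0 := Nat.le_zero.mp h
    simp [M]
  | succ n ih =>
    rcases Nat.lt_or_ge k (n + 1) with h' | h'
    · exact le_trans (ih (Nat.lt_succ_iff.mp h')) (le_max_left _ _)
    · obtain rfl : k = n + 1 := le_antisymm h h'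
      exact le_max_right _ _

lemma M_eq_birkhoffSum (φ : Ω → ℝ) {n : ℕ} {ω : Ω} (h : 0 < M T φ n ω) :
    ∃ k < n, M T φ n ω = birkhoffSum T φ (k + 1) ω := by
  induction n with
  | zero => simp [M] at h
  | succ n ih =>
    rcases max_cases (M T φ n ω) (birkhoffSum T φ (n + 1) ω) with ⟨he, _⟩ | ⟨he, _⟩
    · have h' : 0 < M T φ n ω := by
        have : M T φ (n + 1) ω = M T φ n ω := he
        rw [this] at h; exact h
      obtain ⟨k, hk, hke⟩ := ih h'
      exact ⟨k, Nat.lt_succ_of_lt hk, by rw [show M T φ (n+1) ω = M T φ n ω from he, hke]⟩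
    · exact ⟨n, Nat.lt_succ_self n, he⟩

lemma M_key (φ : Ω → ℝ) {n : ℕ} {ω : Ω} (h : 0 < M T φ n ω) :
    M T φ n ω ≤ φ ω + M T φ n (T ω) := by
  obtain ⟨k, hk, he⟩ := M_eq_birkhoffSum φ h
  rw [he, birkhoffSum_succ']
  exact add_le_add le_rfl (birkhoffSum_le_M φ hk.le (T ω))

/-- Maximal ergodic theorem (Garsia's proof). -/
theorem maximal_ergodic (hTm : Measurable T) (hTp : MeasurePreserving T μ μ)
    {φ : Ω → ℝ} (hφm : Measurable φ) (hφi : Integrable φ μ) :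
    0 ≤ ∫ ω in {ω | ∃ n, 0 < birkhoffSum T φ (n + 1) ω}, φ ω ∂μ := by
  set A : ℕ → Set Ω := fun n => {ω | 0 < M T φ n ω} with hA
  have hAm : ∀ n, MeasurableSet (A n) := fun n =>
    measurableSet_lt measurable_const (measurable_M hTm hφm n)
  have hAmono : Monotone A := by
    refine monotone_nat_of_le_succ fun n ω hω => lt_of_lt_of_le hω (M_mono φ n ω)
  have hU : (⋃ n, A n) = {ω | ∃ n, 0 < birkhoffSum T φ (n + 1) ω} := by
    ext ω
    simp only [Set.mem_iUnion, Set.mem_setOf_eq, hA]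
    constructor
    · rintro ⟨n, hn⟩
      obtain ⟨k, _, he⟩ := M_eq_birkhoffSum φ hn
      exact ⟨k, he ▸ hn⟩
    · rintro ⟨n, hn⟩
      exact ⟨n + 1, lt_of_lt_of_le hn (birkhoffSum_le_M φ le_rfl ω)⟩
  have hMT : ∀ n, Integrable (fun ω => M T φ n (T ω)) μ := fun n =>
    (hTp.integrable_comp (integrable_M hTp hφm hφi n).aestronglyMeasurable).2
      (integrable_M hTp hφm hφi n)
  have key : ∀ n, 0 ≤ ∫ ω in A n, φ ω ∂μ := by
    intro n
    have h1 : ∫ ω in A n, (M T φ n ω - M T φ n (T ω)) ∂μ ≤ ∫ ω in A n, φ ω ∂μ := by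
      refine setIntegral_mono_on
        (((integrable_M hTp hφm hφi n).sub (hMT n)).integrableOn)
        hφi.integrableOn (hAm n) ?_
      intro ω hω
      have := M_key φ (hA ▸ hω)
      linarith
    have h2 : ∫ ω, (M T φ n ω - M T φ n (T ω)) ∂μ = 0 := by
      rw [integral_sub (integrable_M hTp hφm hφi n) (hMT n)]
      have : ∫ ω, M T φ n (T ω) ∂μ = ∫ ω, M T φ n ω ∂μ := by
        rw [← integral_map hTm.aemeasurable (measurable_M hTm hφm n).aestronglyMeasurable,
          hTp.map_eq]
      rw [this, sub_self]
    have h3 : ∫ ω in (A n)ᶜ, (M T φ n ω - M T φ n (T ω)) ∂μ ≤ 0 := by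
      refine setIntegral_nonpos (hAm n).compl ?_
      intro ω hω
      have h0 : M T φ n ω ≤ 0 := not_lt.mp hω
      have := M_nonneg (T := T) φ n (T ω)
      linarith
    have h4 : 0 ≤ ∫ ω in A n, (M T φ n ω - M T φ n (T ω)) ∂μ := by
      have h5 := integral_add_compl (hAm n) ((integrable_M hTp hφm hφi n).sub (hMT n))
      simp only [Pi.sub_apply] at h5
      linarith
    linarith
  have := tendsto_setIntegral_of_monotone hAm hAmono
    (hU ▸ hφi.integrableOn : IntegrableOn φ (⋃ n, A n) μ)
  rw [hU] at this
  exact ge_of_tendsto' this key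


lemma eventually_ge_linear (a b : ℝ) (hb : 0 < b) : ∀ᶠ n : ℕ in atTop, a ≤ b * n := by
  refine eventually_atTop.mpr ⟨⌈a / b⌉₊, fun n hn => ?_⟩
  have h1 : a / b ≤ (n : ℝ) := le_trans (Nat.le_ceil _) (Nat.cast_le.mpr hn)
  calc a = a / b * b := by field_simp
  _ ≤ n * b := by nlinarith
  _ = b * n := mul_comm _ _

/-- the "frequently above slope c" set -/
def U (T : Ω → Ω) (φ : Ω → ℝ) (c : ℝ) : Set Ω :=
  {ω | ∃ᶠ n in atTop, c * n < birkhoffSum T φ n ω}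

lemma measurableSet_U (hTm : Measurable T) {φ : Ω → ℝ} (hφm : Measurable φ) (c : ℝ) :
    MeasurableSet (U T φ c) := by
  have : U T φ c = ⋂ N : ℕ, ⋃ n : ℕ, ⋃ _ : N ≤ n, {ω | c * n < birkhoffSum T φ n ω} := by
    ext ω
    simp only [U, Set.mem_setOf_eq, frequently_atTop, Set.mem_iInter, Set.mem_iUnion,
      ge_iff_le, exists_prop]
  rw [this]
  exact MeasurableSet.iInter fun N => MeasurableSet.iUnion fun n => MeasurableSet.iUnion fun _ =>
    measurableSet_lt measurable_const (measurable_birkhoffSum hTm hφm n)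

/-- membership transfer: if `T ω ∈ U c` then `ω ∈ U c'` for `c' < c`. -/
lemma U_step1 {φ : Ω → ℝ} {c c' : ℝ} (h : c' < c) {ω : Ω} (hω : T ω ∈ U T φ c) :
    ω ∈ U T φ c' := by
  have hev : ∀ᶠ n : ℕ in atTop, c - φ ω ≤ (c - c') * ((n : ℝ) + 1) := by
    filter_upwards [eventually_ge_linear (c - φ ω) (c - c') (by linarith)] with n hn
    nlinarith [Nat.cast_nonneg (α := ℝ) n]
  rw [U, Set.mem_setOf_eq, frequently_atTop]
  intro N
  obtain ⟨n, hn, hlt, hev1⟩ := (hω.and_eventually hev).forall_exists_of_atTop N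
  refine ⟨n + 1, le_trans hn (Nat.le_succ n), ?_⟩
  rw [birkhoffSum_succ']
  push_cast
  nlinarith

/-- membership transfer: if `ω ∈ U c` then `T ω ∈ U c'` for `c' < c`. -/
lemma U_step2 {φ : Ω → ℝ} {c c' : ℝ} (h : c' < c) {ω : Ω} (hω : ω ∈ U T φ c) :
    T ω ∈ U T φ c' := by
  have hev : ∀ᶠ n : ℕ in atTop, (φ ω - c ≤ (c - c') * ((n : ℝ) - 1) ∧ 1 ≤ n) := by
    have h2 : ∀ᶠ n : ℕ in atTop, φ ω - c ≤ (c - c') * n := by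
      filter_upwards [eventually_ge_linear (φ ω - c) (c - c') (by linarith)] with n hn
      exact hn
    obtain ⟨N, hN⟩ := eventually_atTop.mp h2
    refine eventually_atTop.mpr ⟨N + 1, fun n hn => ⟨?_, by omega⟩⟩
    have := hN (n - 1) (by omega)
    have hc : ((n - 1 : ℕ) : ℝ) = (n : ℝ) - 1 := by
      push_cast [Nat.cast_sub (by omega : 1 ≤ n)]; ring
    rw [hc] at this; exact this
  rw [U, Set.mem_setOf_eq, frequently_atTop]
  intro N
  obtain ⟨n, hn, hlt, hev1, hn1⟩ := (hω.and_eventually hev).forall_exists_of_atTop (N + 1)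
  obtain ⟨m, rfl⟩ : ∃ m, n = m + 1 := ⟨n - 1, by omega⟩
  refine ⟨m, by omega, ?_⟩
  have hS : birkhoffSum T φ (m + 1) ω = φ ω + birkhoffSum T φ m (T ω) := birkhoffSum_succ' ..
  push_cast at hlt hev1 ⊢
  nlinarith

lemma birkhoffSum_sub_const (φ : Ω → ℝ) (c : ℝ) (n : ℕ) (ω : Ω) :
    birkhoffSum T (fun x => φ x - c) n ω = birkhoffSum T φ n ω - n * c := by
  simp [birkhoffSum, Finset.sum_sub_distrib, mul_comm]

lemma birkhoffSum_neg' (φ : Ω → ℝ) (n : ℕ) (ω : Ω) :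
    birkhoffSum T (fun x => -φ x) n ω = -birkhoffSum T φ n ω := by
  simp [birkhoffSum]

/-- One-sided Birkhoff bound for ergodic maps. -/
lemma birkhoff_le (hT : Ergodic T μ) {φ : Ω → ℝ} (hφm : Measurable φ)
    (hφi : Integrable φ μ) {ε : ℝ} (hε : 0 < ε) :
    ∀ᵐ ω ∂μ, ∀ᶠ n : ℕ in atTop, birkhoffSum T φ n ω ≤ ((∫ x, φ x ∂μ) + ε) * n := by
  have hTm : Measurable T := hT.measurable
  have hTp : MeasurePreserving T μ μ := hT.toMeasurePreserving
  set L := ∫ x, φ x ∂μ with hL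
  set c := L + ε with hc
  set V := ⋂ j : ℕ, U T φ (c - 1 / (j + 1)) with hV
  have hVm : MeasurableSet V :=
    MeasurableSet.iInter fun j => measurableSet_U hTm hφm _
  have hmono : ∀ j : ℕ, c - 1 / ((j : ℝ) + 1) < c - 1 / ((j + 1 : ℕ) + 1) := by
    intro j
    have h1 : (0 : ℝ) < (j : ℝ) + 1 := by positivity
    have h2 : (0 : ℝ) < ((j + 1 : ℕ) : ℝ) + 1 := by positivity
    have : (1 : ℝ) / (((j + 1 : ℕ) : ℝ) + 1) < 1 / ((j : ℝ) + 1) := by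
      apply one_div_lt_one_div_of_lt h1
      push_cast; linarith
    linarith
  have hinv : T ⁻¹' V = V := by
    ext ω
    simp only [Set.mem_preimage, hV, Set.mem_iInter]
    constructor
    · intro h j
      exact U_step1 (hmono j) (h (j + 1))
    · intro h j
      exact U_step2 (hmono j) (h (j + 1))
  rcases hT.toPreErgodic.measure_self_or_compl_eq_zero hVm hinv with h0 | h1
  · -- μ V = 0 : conclude
    have hae : ∀ᵐ ω ∂μ, ω ∉ V := by
      rw [ae_iff]; simpa using h0
    filter_upwards [hae] with ω hω
    obtain ⟨j, hj⟩ : ∃ j : ℕ, ω ∉ U T φ (c - 1 / (j + 1)) := by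
      by_contra hcon
      push_neg at hcon
      exact hω (Set.mem_iInter.mpr hcon)
    rw [U, Set.mem_setOf_eq, not_frequently] at hj
    filter_upwards [hj] with n hn
    have h1 : birkhoffSum T φ n ω ≤ (c - 1 / (j + 1)) * n := not_lt.mp hn
    have h2 : (c - 1 / ((j : ℝ) + 1)) * n ≤ c * n := by
      have : (0 : ℝ) < 1 / ((j : ℝ) + 1) := by positivity
      nlinarith [Nat.cast_nonneg (α := ℝ) n]
    exact le_trans h1 h2
  · -- μ Vᶜ = 0 : contradiction with the maximal ergodic theorem
    exfalso
    obtain ⟨j0, hj0⟩ := exists_nat_one_div_lt hε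
    set c' := c - 1 / ((j0 : ℝ) + 1) with hc'
    have hLc' : L < c' := by
      rw [hc', hc]; linarith
    set ψ := fun x => φ x - c' with hψ
    have hψm : Measurable ψ := hφm.sub measurable_const
    have hψi : Integrable ψ μ := hφi.sub (integrable_const c')
    set A := {ω | ∃ n, 0 < birkhoffSum T ψ (n + 1) ω} with hA
    have hAm : MeasurableSet A := by
      have : A = ⋃ n, {ω | 0 < birkhoffSum T ψ (n + 1) ω} := by
        ext ω; simp [hA]
      rw [this]
      exact MeasurableSet.iUnion fun n =>
        measurableSet_lt measurable_const (measurable_birkhoffSum hTm hψm (n + 1))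
    have hsub : V ⊆ A := by
      intro ω hω
      have hU0 : ω ∈ U T φ c' := Set.mem_iInter.mp hω j0
      obtain ⟨n, hn, hlt⟩ := frequently_atTop.mp hU0 1
      obtain ⟨m, rfl⟩ : ∃ m, n = m + 1 := ⟨n - 1, by omega⟩
      refine ⟨m, ?_⟩
      rw [hψ, birkhoffSum_sub_const]
      push_cast at hlt ⊢
      nlinarith
    have hAc : μ Aᶜ = 0 :=
      measure_mono_null (Set.compl_subset_compl.mpr hsub) h1
    have hintA : ∫ ω in A, ψ ω ∂μ = ∫ ω, ψ ω ∂μ := by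
      have h5 := integral_add_compl hAm hψi
      have h6 : ∫ ω in Aᶜ, ψ ω ∂μ = 0 := by
        rw [Measure.restrict_eq_zero.mpr hAc, integral_zero_measure]
      linarith
    have hmax := maximal_ergodic hTm hTp hψm hψi
    rw [← hA, hintA] at hmax
    have : ∫ ω, ψ ω ∂μ = L - c' := by
      rw [hψ, integral_sub hφi (integrable_const c'), integral_const]
      simp
      rfl
    rw [this] at hmax
    linarith

/-- Birkhoff's pointwise ergodic theorem, ergodic case. -/
theorem birkhoff (hT : Ergodic T μ) {φ : Ω → ℝ} (hφm : Measurable φ)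
    (hφi : Integrable φ μ) :
    ∀ᵐ ω ∂μ, Tendsto (fun n : ℕ => (n : ℝ)⁻¹ * birkhoffSum T φ n ω) atTop
      (𝓝 (∫ x, φ x ∂μ)) := by
  set L := ∫ x, φ x ∂μ with hL
  have hup : ∀ᵐ ω ∂μ, ∀ k : ℕ, ∀ᶠ n : ℕ in atTop,
      birkhoffSum T φ n ω ≤ (L + 1 / (k + 1)) * n :=
    ae_all_iff.mpr fun k => birkhoff_le hT hφm hφi (by positivity)
  have hdn : ∀ᵐ ω ∂μ, ∀ k : ℕ, ∀ᶠ n : ℕ in atTop,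
      (L - 1 / ((k : ℝ) + 1)) * (n : ℝ) ≤ birkhoffSum T φ n ω := by
    refine ae_all_iff.mpr fun k => ?_
    have h := birkhoff_le hT hφm.neg hφi.neg
      (ε := 1 / ((k : ℝ) + 1)) (by positivity)
    filter_upwards [h] with ω hω
    filter_upwards [hω] with n hn
    have h1 : integral μ (-φ) = -L := by rw [hL, ← integral_neg]; rfl
    have h2 : birkhoffSum T (-φ) n ω = -birkhoffSum T φ n ω := birkhoffSum_neg' φ n ω
    rw [h2, h1] at hn
    nlinarith
  filter_upwards [hup, hdn] with ω h1 h2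
  rw [tendsto_order]
  constructor
  · intro b hb
    obtain ⟨k, hk⟩ := exists_nat_one_div_lt (show (0:ℝ) < L - b by linarith)
    filter_upwards [h2 k, eventually_ge_atTop 1] with n hn hn1
    have hnpos : (0 : ℝ) < (n : ℝ) := Nat.cast_pos.mpr hn1
    have : b * n < birkhoffSum T φ n ω := by
      have : b < L - 1 / ((k : ℝ) + 1) := by push_cast at hk ⊢; linarith
      nlinarith
    have h4 := mul_lt_mul_of_pos_left this (inv_pos.mpr hnpos)
    have he : (n : ℝ)⁻¹ * (b * n) = b := by field_simp
    linarith
  · intro b hb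
    obtain ⟨k, hk⟩ := exists_nat_one_div_lt (show (0:ℝ) < b - L by linarith)
    filter_upwards [h1 k, eventually_ge_atTop 1] with n hn hn1
    have hnpos : (0 : ℝ) < (n : ℝ) := Nat.cast_pos.mpr hn1
    have : birkhoffSum T φ n ω < b * n := by
      have : L + 1 / ((k : ℝ) + 1) < b := by push_cast at hk ⊢; linarith
      nlinarith
    have h4 := mul_lt_mul_of_pos_left this (inv_pos.mpr hnpos)
    have he : (n : ℝ)⁻¹ * (b * n) = b := by field_simp
    linarith

lemma sum_Icc_one (h : ℕ → ℝ) (n : ℕ) :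
    ∑ i ∈ Finset.Icc 1 n, h i = ∑ i ∈ Finset.range n, h (i + 1) := by
  induction n with
  | zero => simp
  | succ n ih =>
    rw [Finset.sum_Icc_succ_top (by omega : 1 ≤ n + 1), ih, Finset.sum_range_succ]

lemma birkhoffSum_comp_T (ψ : Ω → ℝ) (n : ℕ) (ω : Ω) :
    birkhoffSum T ψ n (T ω) = ∑ i ∈ Finset.Icc 1 n, ψ (T^[i] ω) := by
  rw [sum_Icc_one (fun i => ψ (T^[i] ω)) n, birkhoffSum]
  refine Finset.sum_congr rfl fun i _ => ?_
  rw [← Function.iterate_succ_apply]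

/-- One-sided Breiman bound. -/
lemma breiman_upper (hT : Ergodic T μ) {f : ℕ → Ω → ℝ} {flim : Ω → ℝ}
    (hfm : ∀ n, Measurable (f n)) (hflimm : Measurable flim)
    (hconv : ∀ᵐ ω ∂μ, Tendsto (fun n => f n ω) atTop (𝓝 (flim ω)))
    {g : Ω → ℝ} (hgi : Integrable g μ) (henv : ∀ n ω, |f n ω| ≤ g ω)
    {ε : ℝ} (hε : 0 < ε) :
    ∀ᵐ ω ∂μ, ∀ᶠ n : ℕ in atTop,
      (1 / (n : ℝ)) * ∑ i ∈ Finset.Icc 1 n, f i (T^[i] ω) ≤ (∫ x, flim x ∂μ) + ε := by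
  have hTm : Measurable T := hT.measurable
  have hTp : MeasurePreserving T μ μ := hT.toMeasurePreserving
  have hg0 : ∀ ω, 0 ≤ g ω := fun ω => le_trans (abs_nonneg _) (henv 0 ω)
  -- tail suprema
  set G : ℕ → Ω → ℝ := fun N ω => ⨆ k, f (N + k) ω with hG
  have hbdd : ∀ N ω, BddAbove (Set.range fun k => f (N + k) ω) := by
    intro N ω
    exact ⟨g ω, by rintro x ⟨k, rfl⟩; exact le_of_abs_le (henv (N + k) ω)⟩
  have hGle : ∀ N ω, G N ω ≤ g ω :=
    fun N ω => ciSup_le fun k => le_of_abs_le (henv (N + k) ω)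
  have hGge : ∀ N ω, -g ω ≤ G N ω := fun N ω =>
    le_trans (neg_le_of_abs_le (henv (N + 0) ω)) (le_ciSup (hbdd N ω) 0)
  have hfleG : ∀ N i, N ≤ i → ∀ x, f i x ≤ G N x := by
    intro N i hNi x
    have := le_ciSup (hbdd N x) (i - N)
    rwa [Nat.add_sub_cancel' hNi] at this
  -- measurability of G N via partial maxima
  have hGm : ∀ N, Measurable (G N) := by
    intro N
    set P : ℕ → Ω → ℝ := fun m ω => (Finset.range (m + 1)).sup' Finset.nonempty_range_add_one
      (fun k => f (N + k) ω) with hPdef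
    have hPm : ∀ m, Measurable (P m) := by
      intro m
      have he : P m = (Finset.range (m + 1)).sup' Finset.nonempty_range_add_one
          (fun k => f (N + k)) := by
        ext ω; rw [Finset.sup'_apply]
      rw [he]
      exact Finset.measurable_sup' _ fun k _ => hfm (N + k)
    have hPmono : ∀ ω, Monotone fun m => P m ω := by
      intro ω m m' hmm'
      refine Finset.sup'_le _ _ fun k hk => ?_
      refine Finset.le_sup' (f := fun k => f (N + k) ω) ?_
      simp only [Finset.mem_range] at hk ⊢
      omega
    have hPbdd : ∀ ω, BddAbove (Set.range fun m => P m ω) := by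
      intro ω
      refine ⟨g ω, ?_⟩
      rintro x ⟨m, rfl⟩
      exact Finset.sup'_le _ _ fun k _ => le_of_abs_le (henv (N + k) ω)
    have hPtend : ∀ ω, Tendsto (fun m => P m ω) atTop (𝓝 (G N ω)) := by
      intro ω
      have h1 : (⨆ m, P m ω) = G N ω := by
        apply le_antisymm
        · refine ciSup_le fun m => Finset.sup'_le _ _ fun k _ => ?_
          exact le_ciSup (hbdd N ω) k
        · refine ciSup_le fun k => ?_
          refine le_trans (Finset.le_sup' (f := fun k => f (N + k) ω)
            (Finset.self_mem_range_succ k)) ?_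
          exact le_ciSup (hPbdd ω) k
      rw [← h1]
      exact tendsto_atTop_ciSup (hPmono ω) (hPbdd ω)
    exact measurable_of_tendsto_metrizable' atTop hPm (tendsto_pi_nhds.mpr hPtend)
  have hGi : ∀ N, Integrable (G N) μ := by
    intro N
    refine hgi.mono (hGm N).aestronglyMeasurable (ae_of_all _ fun ω => ?_)
    rw [Real.norm_eq_abs, Real.norm_eq_abs, abs_le]
    exact ⟨neg_le_of_neg_le (by have := hGge N ω; have := le_abs_self (g ω); linarith),
      le_trans (hGle N ω) (le_abs_self _)⟩
  -- G N → flim a.e.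
  have hGlim : ∀ᵐ ω ∂μ, Tendsto (fun N => G N ω) atTop (𝓝 (flim ω)) := by
    filter_upwards [hconv] with ω hω
    rw [Metric.tendsto_atTop] at hω ⊢
    intro δ hδ
    obtain ⟨N0, hN0⟩ := hω (δ / 2) (by linarith)
    refine ⟨N0, fun N hN => ?_⟩
    rw [Real.dist_eq, abs_lt]
    constructor
    · have h1 : flim ω - δ / 2 < f N ω := by
        have := hN0 N hN
        rw [Real.dist_eq, abs_lt] at this
        linarith [this.1]
      have h2 : f N ω ≤ G N ω := hfleG N N le_rfl ω
      linarith
    · have h1 : G N ω ≤ flim ω + δ / 2 := by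
        refine ciSup_le fun k => ?_
        have := hN0 (N + k) (by omega)
        rw [Real.dist_eq, abs_lt] at this
        linarith [this.2]
      linarith
  have hGint : Tendsto (fun N => ∫ x, G N x ∂μ) atTop (𝓝 (∫ x, flim x ∂μ)) := by
    refine tendsto_integral_of_dominated_convergence g
      (fun N => (hGm N).aestronglyMeasurable) hgi ?_ hGlim
    intro N
    refine ae_of_all _ fun ω => ?_
    rw [Real.norm_eq_abs, abs_le]
    exact ⟨neg_le_of_neg_le (by linarith [hGge N ω]), hGle N ω⟩
  -- choose N with ∫ G N < ∫ flim + ε/2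
  obtain ⟨N, hN⟩ := ((tendsto_order.mp hGint).2 ((∫ x, flim x ∂μ) + ε / 2)
    (by linarith)).exists
  -- Birkhoff for G N, at T ω
  have hB := birkhoff hT (hGm N) (hGi N)
  have hBT : ∀ᵐ ω ∂μ, Tendsto (fun n : ℕ => (n : ℝ)⁻¹ * birkhoffSum T (G N) n (T ω))
      atTop (𝓝 (∫ x, G N x ∂μ)) := by
    exact ae_of_ae_map (p := fun y => Tendsto
        (fun n : ℕ => (n : ℝ)⁻¹ * birkhoffSum T (G N) n y) atTop
        (𝓝 (∫ x, G N x ∂μ))) hTm.aemeasurable (by rw [hTp.map_eq]; exact hB)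
  filter_upwards [hBT] with ω hω
  -- pointwise comparison
  set K : ℝ := ∑ i ∈ Finset.Icc 1 N, 2 * g (T^[i] ω) with hK
  have hcomp : ∀ n : ℕ, (∑ i ∈ Finset.Icc 1 n, f i (T^[i] ω)) ≤
      birkhoffSum T (G N) n (T ω) + K := by
    intro n
    rw [birkhoffSum_comp_T]
    have h1 : (∑ i ∈ Finset.Icc 1 n, f i (T^[i] ω)) ≤
        (∑ i ∈ Finset.Icc 1 n, G N (T^[i] ω)) +
        ∑ i ∈ Finset.Icc 1 n, (if i < N then 2 * g (T^[i] ω) else 0) := by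
      rw [← Finset.sum_add_distrib]
      refine Finset.sum_le_sum fun i _ => ?_
      by_cases hiN : i < N
      · simp only [hiN, if_true]
        have h2 := le_of_abs_le (henv i (T^[i] ω))
        have h3 := hGge N (T^[i] ω)
        linarith
      · simp only [hiN, if_false, add_zero]
        exact hfleG N i (by omega) _
    have h2 : (∑ i ∈ Finset.Icc 1 n, (if i < N then 2 * g (T^[i] ω) else 0)) ≤ K := by
      rw [Finset.sum_ite, Finset.sum_const_zero, add_zero, hK]
      refine Finset.sum_le_sum_of_subset_of_nonneg ?_ ?_
      · intro i hi
        simp only [Finset.mem_filter, Finset.mem_Icc] at hi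
        simp only [Finset.mem_Icc]
        omega
      · intro i _ _
        have := hg0 (T^[i] ω)
        linarith
    linarith
  have hK0 : Tendsto (fun n : ℕ => (n : ℝ)⁻¹ * K) atTop (𝓝 0) := by
    simpa using tendsto_inv_atTop_nhds_zero_nat.mul_const K
  have h5 := hω.add hK0
  rw [add_zero] at h5
  have h6 := (tendsto_order.mp h5).2 ((∫ x, flim x ∂μ) + ε) (by linarith)
  filter_upwards [h6] with n hn
  have h7 : (1 / (n : ℝ)) * ∑ i ∈ Finset.Icc 1 n, f i (T^[i] ω) ≤
      (n : ℝ)⁻¹ * birkhoffSum T (G N) n (T ω) + (n : ℝ)⁻¹ * K := by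
    rw [one_div, ← mul_add]
    exact mul_le_mul_of_nonneg_left (hcomp n) (by positivity)
  linarith


end Breiman


/-- Breiman's generalized ergodic theorem: for an ergodic measure-preserving shift `T`,
measurable functionals `f_n → f` a.s. with an integrable envelope,
`(1/n) Σ_{i=1}^n f_i(T^i ω) → E[f]` almost surely. -/
theorem stmt12 {Ω : Type*} [MeasurableSpace Ω]
    (μ : Measure Ω) [IsProbabilityMeasure μ]
    (T : Ω → Ω) (hT : Ergodic T μ)
    (f : ℕ → Ω → ℝ) (flim : Ω → ℝ)
    (hfm : ∀ n, Measurable (f n)) (hflimm : Measurable flim)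
    (hconv : ∀ᵐ ω ∂μ, Tendsto (fun n => f n ω) atTop (𝓝 (flim ω)))
    (henv : ∃ g : Ω → ℝ, Integrable g μ ∧ ∀ n ω, |f n ω| ≤ g ω) :
    ∀ᵐ ω ∂μ, Tendsto (fun n : ℕ =>
        (1 / (n : ℝ)) * ∑ i ∈ Finset.Icc 1 n, f i (T^[i] ω))
      atTop (𝓝 (∫ ω, flim ω ∂μ)) := by
  obtain ⟨g, hgi, henv⟩ := henv
  set L := ∫ ω, flim ω ∂μ with hL
  have hup : ∀ᵐ ω ∂μ, ∀ k : ℕ, ∀ᶠ n : ℕ in atTop,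
      (1 / (n : ℝ)) * ∑ i ∈ Finset.Icc 1 n, f i (T^[i] ω) ≤ L + 1 / ((k : ℝ) + 1) :=
    ae_all_iff.mpr fun k =>
      Breiman.breiman_upper hT hfm hflimm hconv hgi henv (by positivity)
  have hdn : ∀ᵐ ω ∂μ, ∀ k : ℕ, ∀ᶠ n : ℕ in atTop,
      L - 1 / ((k : ℝ) + 1) ≤
        (1 / (n : ℝ)) * ∑ i ∈ Finset.Icc 1 n, f i (T^[i] ω) := by
    refine ae_all_iff.mpr fun k => ?_
    have h := Breiman.breiman_upper (f := fun n ω => -(f n ω)) (flim := fun ω => -flim ω) hT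
      (fun n => (hfm n).neg) hflimm.neg
      (by filter_upwards [hconv] with ω hω; exact hω.neg)
      hgi (fun n ω => by rw [abs_neg]; exact henv n ω)
      (ε := 1 / ((k : ℝ) + 1)) (by positivity)
    filter_upwards [h] with ω hω
    filter_upwards [hω] with n hn
    have he : ∑ i ∈ Finset.Icc 1 n, -(f i (T^[i] ω)) =
        -∑ i ∈ Finset.Icc 1 n, f i (T^[i] ω) := by
      rw [Finset.sum_neg_distrib]
    have hI : ∫ x, -flim x ∂μ = -L := by rw [hL, ← integral_neg]
    rw [he, hI, mul_neg] at hn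
    linarith
  filter_upwards [hup, hdn] with ω h1 h2
  rw [tendsto_order]
  constructor
  · intro b hb
    obtain ⟨k, hk⟩ := exists_nat_one_div_lt (show (0:ℝ) < L - b by linarith)
    filter_upwards [h2 k] with n hn
    have : (1 : ℝ) / ((k : ℝ) + 1) < L - b := by push_cast at hk ⊢; linarith
    linarith
  · intro b hb
    obtain ⟨k, hk⟩ := exists_nat_one_div_lt (show (0:ℝ) < b - L by linarith)
    filter_upwards [h1 k] with n hn
    have : (1 : ℝ) / ((k : ℝ) + 1) < b - L := by push_cast at hk ⊢; linarith
    linarith
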